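/- arXiv:2604.24546 — 4 statements merged into one kernel-verified Lean document; each statement's English description precedes it below -/
import Mathlib

section
/- Let A₀, A₁ₐ, A₁ᵦ, A₂ be disjoint events with probabilities 0.9925, 0.0025, 0.0025, 0.0025 respectively, and S = 2·1_{A₁ₐ ∪ A₁ᵦ} + 4·1_{A₂}. With ρ₁ = ES_{0.01} and ρ₂ = ES_{0.0075} (Expected Shortfall over the top 1% and 0.75% of mass respectively), the allocation X₁ = 1_{A₁ₐ} + 2·1_{A₁ᵦ} + 4·1_{A₂}, X₂ = 1_{A₁ₐ} satisfies X₁ + X₂ = S, 0 ≤ Xᵢ, VaR_{0.995}(Xᵢ) ≤ 1 for i = 1,2, and ρ₁(X₁) + ρ₂(X₂) = 25/12; whereas every comonotonic allocation (X₁, X₂) of S satisfying the same constraints has ρ₁(X₁) + ρ₂(X₂) ≥ 9/4 > 25/12. -/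
open MeasureTheory

/-- Convex order on integrable real random variables: equal means and
`E[φ(Y)] ≤ E[φ(X)]` for every convex `φ : ℝ → ℝ` for which the expectations exist. -/
def CxLE {Ω : Type*} [MeasurableSpace Ω] (μ : Measure Ω) (Y X : Ω → ℝ) : Prop :=
  (∫ ω, Y ω ∂μ = ∫ ω, X ω ∂μ) ∧
  ∀ φ : ℝ → ℝ, ConvexOn ℝ Set.univ φ →
    Integrable (fun ω => φ (Y ω)) μ → Integrable (fun ω => φ (X ω)) μ →
    ∫ ω, φ (Y ω) ∂μ ≤ ∫ ω, φ (X ω) ∂μ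

/-- Lower `α`-quantile (Value-at-Risk): `inf {x : P(X ≤ x) ≥ α}`. -/
noncomputable def VaR {Ω : Type*} [MeasurableSpace Ω] (μ : Measure Ω)
    (X : Ω → ℝ) (α : ℝ) : ℝ :=
  sInf {x : ℝ | α ≤ (μ {ω | X ω ≤ x}).toReal}

/-- Expected Shortfall at level `β` (average of the upper `β` tail of quantiles):
`ES_β(X) = (1/β) ∫₀^β VaR_{1-u}(X) du`. -/
noncomputable def ES {Ω : Type*} [MeasurableSpace Ω] (μ : Measure Ω)
    (X : Ω → ℝ) (β : ℝ) : ℝ :=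
  (1 / β) * ∫ u in (0:ℝ)..β, VaR μ X (1 - u)

/- ### Auxiliary lemmas -/

lemma VaR_eq_of {Ω : Type*} [MeasurableSpace Ω] (μ : Measure Ω) (Y : Ω → ℝ) (α c : ℝ)
    (h1 : ∀ x, c ≤ x → α ≤ (μ {ω | Y ω ≤ x}).toReal)
    (h2 : ∀ x, x < c → (μ {ω | Y ω ≤ x}).toReal < α) :
    VaR μ Y α = c := by
  have hs : {x : ℝ | α ≤ (μ {ω | Y ω ≤ x}).toReal} = Set.Ici c := by
    ext x
    simp only [Set.mem_setOf_eq, Set.mem_Ici]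
    exact ⟨fun h => not_lt.mp fun hlt => absurd h (not_le.mpr (h2 x hlt)), h1 x⟩
  rw [VaR, hs, csInf_Ici]

lemma VaR_ge_of {Ω : Type*} [MeasurableSpace Ω] (μ : Measure Ω) (Y : Ω → ℝ) (α c : ℝ)
    (h2 : ∀ x, x < c → (μ {ω | Y ω ≤ x}).toReal < α)
    (hne : ∃ x, α ≤ (μ {ω | Y ω ≤ x}).toReal) :
    c ≤ VaR μ Y α :=
  le_csInf hne fun x hx => not_lt.mp fun hlt => absurd hx (not_le.mpr (h2 x hlt))

lemma step_ae {g : ℝ → ℝ} {a b c : ℝ} (hab : a ≤ b) (h : ∀ u ∈ Set.Ioo a b, g u = c) :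
    ∀ᵐ x ∂(volume : Measure ℝ), x ∈ Set.uIoc a b → g x = c := by
  have hb : (volume : Measure ℝ) {b} = 0 := measure_singleton b
  filter_upwards [measure_eq_zero_iff_ae_notMem.mp hb] with x hx hmem
  rw [Set.uIoc_of_le hab] at hmem
  exact h x ⟨hmem.1, lt_of_le_of_ne hmem.2 (by simpa using hx)⟩

lemma step_integral {g : ℝ → ℝ} {a b c : ℝ} (hab : a ≤ b)
    (h : ∀ u ∈ Set.Ioo a b, g u = c) :
    ∫ u in a..b, g u = (b - a) * c := by
  rw [intervalIntegral.integral_congr_ae (step_ae hab h)]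
  simp [smul_eq_mul]

lemma step_integrable {g : ℝ → ℝ} {a b c : ℝ} (hab : a ≤ b)
    (h : ∀ u ∈ Set.Ioo a b, g u = c) :
    IntervalIntegrable g volume a b := by
  refine (intervalIntegrable_const (c := c)).congr_ae ?_
  exact Filter.EventuallyEq.symm ((ae_restrict_iff' measurableSet_uIoc).mpr (step_ae hab h))

lemma F_eval {Ω : Type*} [MeasurableSpace Ω] (μ : Measure Ω) [IsProbabilityMeasure μ]
    (Aa Ab A2 : Set Ω) (hma : MeasurableSet Aa) (hmb : MeasurableSet Ab)
    (hm2 : MeasurableSet A2)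
    (hab : Disjoint Aa Ab) (ha2 : Disjoint Aa A2) (hb2 : Disjoint Ab A2)
    (hpa : μ Aa = ENNReal.ofReal 0.0025) (hpb : μ Ab = ENNReal.ofReal 0.0025)
    (hp2 : μ A2 = ENNReal.ofReal 0.0025)
    (s t u : ℝ) (Y : Ω → ℝ)
    (hYa : ∀ ω ∈ Aa, Y ω = s) (hYb : ∀ ω ∈ Ab, Y ω = t) (hY2 : ∀ ω ∈ A2, Y ω = u)
    (hY0 : ∀ ω, ω ∉ Aa ∪ Ab ∪ A2 → Y ω = 0) (x : ℝ) :
    (μ {ω | Y ω ≤ x}).toReal = (if 0 ≤ x then 0.9925 else 0) + (if s ≤ x then 0.0025 else 0)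
      + (if t ≤ x then 0.0025 else 0) + (if u ≤ x then 0.0025 else 0) := by
  set T : Set Ω := {ω | Y ω ≤ x} with hT
  have key : ∀ (B : Set Ω) (v : ℝ), (∀ ω ∈ B, Y ω = v) → T ∩ B = if v ≤ x then B else ∅ := by
    intro B v hv
    by_cases hvx : v ≤ x
    · rw [if_pos hvx]
      apply Set.eq_of_subset_of_subset (Set.inter_subset_right)
      intro ω hω
      exact ⟨by simp only [hT, Set.mem_setOf_eq, hv ω hω]; exact hvx, hω⟩
    · rw [if_neg hvx]
      apply Set.eq_empty_of_forall_notMem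
      rintro ω ⟨h1, h2⟩
      rw [hT, Set.mem_setOf_eq, hv ω h2] at h1
      exact hvx h1
  have hd1 : μ (T ∩ Aa) + μ (T \ Aa) = μ T := measure_inter_add_diff T hma
  have hd2 : μ ((T \ Aa) ∩ Ab) + μ ((T \ Aa) \ Ab) = μ (T \ Aa) :=
    measure_inter_add_diff _ hmb
  have hd3 : μ (((T \ Aa) \ Ab) ∩ A2) + μ (((T \ Aa) \ Ab) \ A2) = μ ((T \ Aa) \ Ab) :=
    measure_inter_add_diff _ hm2
  have e2 : (T \ Aa) ∩ Ab = T ∩ Ab := by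
    ext ω
    simp only [Set.mem_inter_iff, Set.mem_diff]
    exact ⟨fun ⟨⟨h1, _⟩, h2⟩ => ⟨h1, h2⟩,
      fun ⟨h1, h2⟩ => ⟨⟨h1, fun ha => Set.disjoint_left.mp hab ha h2⟩, h2⟩⟩
  have e3 : ((T \ Aa) \ Ab) ∩ A2 = T ∩ A2 := by
    ext ω
    simp only [Set.mem_inter_iff, Set.mem_diff]
    exact ⟨fun ⟨⟨⟨h1, _⟩, _⟩, h2⟩ => ⟨h1, h2⟩,
      fun ⟨h1, h2⟩ => ⟨⟨⟨h1, fun ha => Set.disjoint_left.mp ha2 ha h2⟩,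
        fun hb => Set.disjoint_left.mp hb2 hb h2⟩, h2⟩⟩
  have e4 : ((T \ Aa) \ Ab) \ A2 = T ∩ (Aa ∪ Ab ∪ A2)ᶜ := by
    ext ω
    simp only [Set.mem_inter_iff, Set.mem_diff, Set.mem_compl_iff, Set.mem_union]
    tauto
  have hR : MeasurableSet (Aa ∪ Ab ∪ A2) := (hma.union hmb).union hm2
  have hμR : μ (Aa ∪ Ab ∪ A2) = ENNReal.ofReal 0.0075 := by
    rw [measure_union (Set.disjoint_union_left.mpr ⟨ha2, hb2⟩) hm2,
      measure_union hab hmb, hpa, hpb, hp2,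
      ← ENNReal.ofReal_add (by norm_num) (by norm_num),
      ← ENNReal.ofReal_add (by norm_num) (by norm_num)]
    norm_num
  have hμRc : μ (Aa ∪ Ab ∪ A2)ᶜ = ENNReal.ofReal 0.9925 := by
    rw [measure_compl hR (measure_ne_top μ _), hμR, measure_univ,
      ← ENNReal.ofReal_one, ← ENNReal.ofReal_sub _ (by norm_num)]
    norm_num
  have pa : μ (T ∩ Aa) = ENNReal.ofReal (if s ≤ x then 0.0025 else 0) := by
    rw [key Aa s hYa]; split_ifs with h
    · exact hpa
    · simp
  have pb : μ (T ∩ Ab) = ENNReal.ofReal (if t ≤ x then 0.0025 else 0) := by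
    rw [key Ab t hYb]; split_ifs with h
    · exact hpb
    · simp
  have p2 : μ (T ∩ A2) = ENNReal.ofReal (if u ≤ x then 0.0025 else 0) := by
    rw [key A2 u hY2]; split_ifs with h
    · exact hp2
    · simp
  have p0 : μ (T ∩ (Aa ∪ Ab ∪ A2)ᶜ) = ENNReal.ofReal (if 0 ≤ x then 0.9925 else 0) := by
    have : T ∩ (Aa ∪ Ab ∪ A2)ᶜ = if (0:ℝ) ≤ x then (Aa ∪ Ab ∪ A2)ᶜ else ∅ :=
      key _ 0 fun ω hω => hY0 ω hω
    rw [this]; split_ifs with h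
    · exact hμRc
    · simp
  have hμT : μ T = ENNReal.ofReal ((if 0 ≤ x then 0.9925 else 0) + (if s ≤ x then 0.0025 else 0)
      + (if t ≤ x then 0.0025 else 0) + (if u ≤ x then 0.0025 else 0)) := by
    rw [← hd1, ← hd2, ← hd3, e2, e3, e4, pa, pb, p2, p0,
      ← ENNReal.ofReal_add (by positivity) (by positivity),
      ← ENNReal.ofReal_add (by positivity) (by positivity),
      ← ENNReal.ofReal_add (by positivity) (by positivity)]
    ring_nf
  rw [hμT, ENNReal.toReal_ofReal (by positivity)]

set_option maxHeartbeats 2000000 in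
/-- The Value-at-Risk-ceiling counterexample: a feasible non-comonotonic allocation
achieves total risk `25/12`, while every comonotonic allocation satisfying the same
nonnegativity and `VaR_{0.995} ≤ 1` constraints has total risk at least `9/4 > 25/12`. -/
theorem stmt13 {Ω : Type*} [MeasurableSpace Ω] (μ : Measure Ω) [IsProbabilityMeasure μ]
    (A₀ A₁ₐ A₁ᵦ A₂ : Set Ω)
    (hm₀ : MeasurableSet A₀) (hmₐ : MeasurableSet A₁ₐ)
    (hmᵦ : MeasurableSet A₁ᵦ) (hm₂ : MeasurableSet A₂)
    (hdisj : Pairwise (Function.onFun Disjoint ![A₀, A₁ₐ, A₁ᵦ, A₂]))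
    (hp₀ : μ A₀ = ENNReal.ofReal 0.9925) (hpₐ : μ A₁ₐ = ENNReal.ofReal 0.0025)
    (hpᵦ : μ A₁ᵦ = ENNReal.ofReal 0.0025) (hp₂ : μ A₂ = ENNReal.ofReal 0.0025)
    (S X₁ X₂ : Ω → ℝ)
    (hS : S = fun ω => 2 * Set.indicator (A₁ₐ ∪ A₁ᵦ) 1 ω + 4 * Set.indicator A₂ 1 ω)
    (hX₁ : X₁ = fun ω => Set.indicator A₁ₐ 1 ω + 2 * Set.indicator A₁ᵦ 1 ω
      + 4 * Set.indicator A₂ 1 ω)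
    (hX₂ : X₂ = fun ω => Set.indicator A₁ₐ 1 ω) :
    (∀ ω, X₁ ω + X₂ ω = S ω) ∧
    (∀ ω, 0 ≤ X₁ ω) ∧ (∀ ω, 0 ≤ X₂ ω) ∧
    VaR μ X₁ 0.995 ≤ 1 ∧ VaR μ X₂ 0.995 ≤ 1 ∧
    ES μ X₁ 0.01 + ES μ X₂ 0.0075 = 25/12 ∧
    (∀ f₁ f₂ : ℝ → ℝ, Monotone f₁ → Monotone f₂ →
      (∀ ω, f₁ (S ω) + f₂ (S ω) = S ω) →
      (∀ ω, 0 ≤ f₁ (S ω)) → (∀ ω, 0 ≤ f₂ (S ω)) →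
      VaR μ (fun ω => f₁ (S ω)) 0.995 ≤ 1 →
      VaR μ (fun ω => f₂ (S ω)) 0.995 ≤ 1 →
      9/4 ≤ ES μ (fun ω => f₁ (S ω)) 0.01 + ES μ (fun ω => f₂ (S ω)) 0.0075) ∧
    (25 : ℝ)/12 < 9/4 := by
  -- pairwise disjointness facts
  have d0a : Disjoint A₀ A₁ₐ := hdisj (show (0 : Fin 4) ≠ 1 by decide)
  have d0b : Disjoint A₀ A₁ᵦ := hdisj (show (0 : Fin 4) ≠ 2 by decide)
  have d02 : Disjoint A₀ A₂ := hdisj (show (0 : Fin 4) ≠ 3 by decide)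
  have dab : Disjoint A₁ₐ A₁ᵦ := hdisj (show (1 : Fin 4) ≠ 2 by decide)
  have da2 : Disjoint A₁ₐ A₂ := hdisj (show (1 : Fin 4) ≠ 3 by decide)
  have db2 : Disjoint A₁ᵦ A₂ := hdisj (show (2 : Fin 4) ≠ 3 by decide)
  -- indicator nonnegativity helper
  have indnn : ∀ (B : Set Ω) (ω : Ω), (0:ℝ) ≤ B.indicator (1 : Ω → ℝ) ω :=
    fun B ω => Set.indicator_nonneg (fun _ _ => zero_le_one) ω
  -- pointwise values of X₁
  have hX₁a : ∀ ω ∈ A₁ₐ, X₁ ω = 1 := by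
    intro ω hω
    have h1 : ω ∉ A₁ᵦ := Set.disjoint_left.mp dab hω
    have h2 : ω ∉ A₂ := Set.disjoint_left.mp da2 hω
    rw [hX₁]
    simp [Set.indicator_of_mem hω, Set.indicator_of_notMem h1, Set.indicator_of_notMem h2]
  have hX₁b : ∀ ω ∈ A₁ᵦ, X₁ ω = 2 := by
    intro ω hω
    have h1 : ω ∉ A₁ₐ := Set.disjoint_right.mp dab hω
    have h2 : ω ∉ A₂ := Set.disjoint_left.mp db2 hω
    rw [hX₁]
    simp [Set.indicator_of_mem hω, Set.indicator_of_notMem h1, Set.indicator_of_notMem h2]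
  have hX₁2 : ∀ ω ∈ A₂, X₁ ω = 4 := by
    intro ω hω
    have h1 : ω ∉ A₁ₐ := Set.disjoint_right.mp da2 hω
    have h2 : ω ∉ A₁ᵦ := Set.disjoint_right.mp db2 hω
    rw [hX₁]
    simp [Set.indicator_of_mem hω, Set.indicator_of_notMem h1, Set.indicator_of_notMem h2]
  have hX₁0 : ∀ ω, ω ∉ A₁ₐ ∪ A₁ᵦ ∪ A₂ → X₁ ω = 0 := by
    intro ω hω
    simp only [Set.mem_union, not_or] at hω
    rw [hX₁]
    simp [Set.indicator_of_notMem hω.1.1, Set.indicator_of_notMem hω.1.2,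
      Set.indicator_of_notMem hω.2]
  -- pointwise values of X₂
  have hX₂a : ∀ ω ∈ A₁ₐ, X₂ ω = 1 := by
    intro ω hω; rw [hX₂]; simp [Set.indicator_of_mem hω]
  have hX₂b : ∀ ω ∈ A₁ᵦ, X₂ ω = 0 := by
    intro ω hω
    have h1 : ω ∉ A₁ₐ := Set.disjoint_right.mp dab hω
    rw [hX₂]; simp [Set.indicator_of_notMem h1]
  have hX₂2 : ∀ ω ∈ A₂, X₂ ω = 0 := by
    intro ω hω
    have h1 : ω ∉ A₁ₐ := Set.disjoint_right.mp da2 hω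
    rw [hX₂]; simp [Set.indicator_of_notMem h1]
  have hX₂0 : ∀ ω, ω ∉ A₁ₐ ∪ A₁ᵦ ∪ A₂ → X₂ ω = 0 := by
    intro ω hω
    simp only [Set.mem_union, not_or] at hω
    rw [hX₂]; simp [Set.indicator_of_notMem hω.1.1]
  -- pointwise values of S
  have hSa : ∀ ω ∈ A₁ₐ, S ω = 2 := by
    intro ω hω
    have h2 : ω ∉ A₂ := Set.disjoint_left.mp da2 hω
    rw [hS]
    simp [Set.indicator_of_mem (Set.mem_union_left _ hω), Set.indicator_of_notMem h2]
  have hSb : ∀ ω ∈ A₁ᵦ, S ω = 2 := by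
    intro ω hω
    have h2 : ω ∉ A₂ := Set.disjoint_left.mp db2 hω
    rw [hS]
    simp [Set.indicator_of_mem (Set.mem_union_right _ hω), Set.indicator_of_notMem h2]
  have hS2 : ∀ ω ∈ A₂, S ω = 4 := by
    intro ω hω
    have h1 : ω ∉ A₁ₐ := Set.disjoint_right.mp da2 hω
    have h2 : ω ∉ A₁ᵦ := Set.disjoint_right.mp db2 hω
    have h3 : ω ∉ A₁ₐ ∪ A₁ᵦ := by simp [h1, h2]
    rw [hS]
    simp [Set.indicator_of_mem hω, Set.indicator_of_notMem h3]
  have hS0 : ∀ ω, ω ∉ A₁ₐ ∪ A₁ᵦ ∪ A₂ → S ω = 0 := by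
    intro ω hω
    simp only [Set.mem_union, not_or] at hω
    have h3 : ω ∉ A₁ₐ ∪ A₁ᵦ := by simp [hω.1.1, hω.1.2]
    rw [hS]
    simp [Set.indicator_of_notMem h3, Set.indicator_of_notMem hω.2]
  -- the distribution functions
  have F₁ : ∀ x, (μ {ω | X₁ ω ≤ x}).toReal =
      (if 0 ≤ x then 0.9925 else 0) + (if (1:ℝ) ≤ x then 0.0025 else 0)
      + (if (2:ℝ) ≤ x then 0.0025 else 0) + (if (4:ℝ) ≤ x then 0.0025 else 0) :=
    F_eval μ A₁ₐ A₁ᵦ A₂ hmₐ hmᵦ hm₂ dab da2 db2 hpₐ hpᵦ hp₂ 1 2 4 X₁ hX₁a hX₁b hX₁2 hX₁0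
  have F₂ : ∀ x, (μ {ω | X₂ ω ≤ x}).toReal =
      (if 0 ≤ x then 0.9925 else 0) + (if (1:ℝ) ≤ x then 0.0025 else 0)
      + (if (0:ℝ) ≤ x then 0.0025 else 0) + (if (0:ℝ) ≤ x then 0.0025 else 0) :=
    F_eval μ A₁ₐ A₁ᵦ A₂ hmₐ hmᵦ hm₂ dab da2 db2 hpₐ hpᵦ hp₂ 1 0 0 X₂ hX₂a hX₂b hX₂2 hX₂0
  -- VaR values for X₁
  have V₁4 : ∀ α : ℝ, 0.9975 < α → α ≤ 1 → VaR μ X₁ α = 4 := by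
    intro α hα1 hα2
    refine VaR_eq_of μ X₁ α 4 (fun x hx => ?_) (fun x hx => ?_) <;>
      rw [F₁ x] <;> split_ifs <;> linarith
  have V₁2 : ∀ α : ℝ, 0.995 < α → α ≤ 0.9975 → VaR μ X₁ α = 2 := by
    intro α hα1 hα2
    refine VaR_eq_of μ X₁ α 2 (fun x hx => ?_) (fun x hx => ?_) <;>
      rw [F₁ x] <;> split_ifs <;> linarith
  have V₁1 : ∀ α : ℝ, 0.9925 < α → α ≤ 0.995 → VaR μ X₁ α = 1 := by
    intro α hα1 hα2
    refine VaR_eq_of μ X₁ α 1 (fun x hx => ?_) (fun x hx => ?_) <;>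
      rw [F₁ x] <;> split_ifs <;> linarith
  have V₁0 : ∀ α : ℝ, 0 < α → α ≤ 0.9925 → VaR μ X₁ α = 0 := by
    intro α hα1 hα2
    refine VaR_eq_of μ X₁ α 0 (fun x hx => ?_) (fun x hx => ?_) <;>
      rw [F₁ x] <;> split_ifs <;> linarith
  -- VaR values for X₂
  have V₂1 : ∀ α : ℝ, 0.9975 < α → α ≤ 1 → VaR μ X₂ α = 1 := by
    intro α hα1 hα2
    refine VaR_eq_of μ X₂ α 1 (fun x hx => ?_) (fun x hx => ?_) <;>
      rw [F₂ x] <;> split_ifs <;> linarith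
  have V₂0 : ∀ α : ℝ, 0 < α → α ≤ 0.9975 → VaR μ X₂ α = 0 := by
    intro α hα1 hα2
    refine VaR_eq_of μ X₂ α 0 (fun x hx => ?_) (fun x hx => ?_) <;>
      rw [F₂ x] <;> split_ifs <;> linarith
  -- ES of X₁ at level 0.01
  have g1 : ∀ u ∈ Set.Ioo (0:ℝ) 0.0025, VaR μ X₁ (1 - u) = 4 := by
    intro u hu; exact V₁4 _ (by linarith [hu.2]) (by linarith [hu.1])
  have g2 : ∀ u ∈ Set.Ioo (0.0025:ℝ) 0.005, VaR μ X₁ (1 - u) = 2 := by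
    intro u hu; exact V₁2 _ (by linarith [hu.2]) (by linarith [hu.1])
  have g3 : ∀ u ∈ Set.Ioo (0.005:ℝ) 0.0075, VaR μ X₁ (1 - u) = 1 := by
    intro u hu; exact V₁1 _ (by linarith [hu.2]) (by linarith [hu.1])
  have g4 : ∀ u ∈ Set.Ioo (0.0075:ℝ) 0.01, VaR μ X₁ (1 - u) = 0 := by
    intro u hu; exact V₁0 _ (by linarith [hu.2]) (by linarith [hu.1])
  have ii1 := step_integrable (show (0:ℝ) ≤ 0.0025 by norm_num) g1
  have ii2 := step_integrable (show (0.0025:ℝ) ≤ 0.005 by norm_num) g2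
  have ii3 := step_integrable (show (0.005:ℝ) ≤ 0.0075 by norm_num) g3
  have ii4 := step_integrable (show (0.0075:ℝ) ≤ 0.01 by norm_num) g4
  have hint₁ : ∫ u in (0:ℝ)..0.01, VaR μ X₁ (1 - u) = 0.0175 := by
    rw [← intervalIntegral.integral_add_adjacent_intervals ((ii1.trans ii2).trans ii3) ii4,
      ← intervalIntegral.integral_add_adjacent_intervals (ii1.trans ii2) ii3,
      ← intervalIntegral.integral_add_adjacent_intervals ii1 ii2,
      step_integral (by norm_num) g1, step_integral (by norm_num) g2,
      step_integral (by norm_num) g3, step_integral (by norm_num) g4]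
    norm_num
  have hES₁ : ES μ X₁ 0.01 = 1.75 := by
    rw [ES, hint₁]; norm_num
  -- ES of X₂ at level 0.0075
  have k1 : ∀ u ∈ Set.Ioo (0:ℝ) 0.0025, VaR μ X₂ (1 - u) = 1 := by
    intro u hu; exact V₂1 _ (by linarith [hu.2]) (by linarith [hu.1])
  have k2 : ∀ u ∈ Set.Ioo (0.0025:ℝ) 0.0075, VaR μ X₂ (1 - u) = 0 := by
    intro u hu; exact V₂0 _ (by linarith [hu.2]) (by linarith [hu.1])
  have jj1 := step_integrable (show (0:ℝ) ≤ 0.0025 by norm_num) k1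
  have jj2 := step_integrable (show (0.0025:ℝ) ≤ 0.0075 by norm_num) k2
  have hint₂ : ∫ u in (0:ℝ)..0.0075, VaR μ X₂ (1 - u) = 0.0025 := by
    rw [← intervalIntegral.integral_add_adjacent_intervals jj1 jj2,
      step_integral (by norm_num) k1, step_integral (by norm_num) k2]
    norm_num
  have hES₂ : ES μ X₂ 0.0075 = 1/3 := by
    rw [ES, hint₂]; norm_num
  refine ⟨?_, ?_, ?_, ?_, ?_, ?_, ?_, by norm_num⟩
  · -- X₁ + X₂ = S
    intro ω
    rw [hX₁, hX₂, hS]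
    simp only [Set.indicator_union_of_disjoint dab, Pi.add_apply]
    ring
  · -- 0 ≤ X₁
    intro ω
    rw [hX₁]
    have h1 := indnn A₁ₐ ω; have h2 := indnn A₁ᵦ ω; have h3 := indnn A₂ ω
    dsimp only
    linarith
  · -- 0 ≤ X₂
    intro ω
    rw [hX₂]
    exact indnn A₁ₐ ω
  · -- VaR X₁
    rw [V₁1 0.995 (by norm_num) (by norm_num)]
  · -- VaR X₂
    rw [V₂0 0.995 (by norm_num) (by norm_num)]; norm_num
  · -- ES sum
    rw [hES₁, hES₂]; norm_num
  · -- comonotonic allocations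
    intro f₁ f₂ hmo₁ hmo₂ hsum hnn₁ hnn₂ hv₁ hv₂
    -- witnesses
    obtain ⟨ω₀, hω₀⟩ : A₀.Nonempty := by
      apply nonempty_of_measure_ne_zero (μ := μ)
      rw [hp₀]; simp only [ne_eq, ENNReal.ofReal_eq_zero]; norm_num
    obtain ⟨ωₐ, hωₐ⟩ : A₁ₐ.Nonempty := by
      apply nonempty_of_measure_ne_zero (μ := μ)
      rw [hpₐ]; simp only [ne_eq, ENNReal.ofReal_eq_zero]; norm_num
    obtain ⟨ω₂, hω₂⟩ : A₂.Nonempty := by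
      apply nonempty_of_measure_ne_zero (μ := μ)
      rw [hp₂]; simp only [ne_eq, ENNReal.ofReal_eq_zero]; norm_num
    have hω₀R : ω₀ ∉ A₁ₐ ∪ A₁ᵦ ∪ A₂ := by
      simp only [Set.mem_union, not_or]
      exact ⟨⟨Set.disjoint_left.mp d0a hω₀, Set.disjoint_left.mp d0b hω₀⟩,
        Set.disjoint_left.mp d02 hω₀⟩
    have hS₀ : S ω₀ = 0 := hS0 ω₀ hω₀R
    have hSₐ : S ωₐ = 2 := hSa ωₐ hωₐ
    have hS₂' : S ω₂ = 4 := hS2 ω₂ hω₂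
    -- values of f at 0, 2, 4
    have hsum0 : f₁ 0 + f₂ 0 = 0 := by have := hsum ω₀; rwa [hS₀] at this
    have hnn10 : 0 ≤ f₁ 0 := by have := hnn₁ ω₀; rwa [hS₀] at this
    have hnn20 : 0 ≤ f₂ 0 := by have := hnn₂ ω₀; rwa [hS₀] at this
    have hf10 : f₁ 0 = 0 := by linarith
    have hf20 : f₂ 0 = 0 := by linarith
    have hsum2 : f₁ 2 + f₂ 2 = 2 := by have := hsum ωₐ; rwa [hSₐ] at this
    have hsum4 : f₁ 4 + f₂ 4 = 4 := by have := hsum ω₂; rwa [hS₂'] at this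
    have hm12 : f₁ 0 ≤ f₁ 2 := hmo₁ (by norm_num)
    have hm14 : f₁ 2 ≤ f₁ 4 := hmo₁ (by norm_num)
    have hm22 : f₂ 0 ≤ f₂ 2 := hmo₂ (by norm_num)
    have hm24 : f₂ 2 ≤ f₂ 4 := hmo₂ (by norm_num)
    -- distribution functions of the comonotonic allocation
    have G₁ : ∀ x, (μ {ω | (fun ω => f₁ (S ω)) ω ≤ x}).toReal =
        (if 0 ≤ x then 0.9925 else 0) + (if f₁ 2 ≤ x then 0.0025 else 0)
        + (if f₁ 2 ≤ x then 0.0025 else 0) + (if f₁ 4 ≤ x then 0.0025 else 0) :=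
      F_eval μ A₁ₐ A₁ᵦ A₂ hmₐ hmᵦ hm₂ dab da2 db2 hpₐ hpᵦ hp₂ (f₁ 2) (f₁ 2) (f₁ 4) _
        (fun ω hω => by rw [hSa ω hω]) (fun ω hω => by rw [hSb ω hω])
        (fun ω hω => by rw [hS2 ω hω]) (fun ω hω => by rw [hS0 ω hω, hf10])
    have G₂ : ∀ x, (μ {ω | (fun ω => f₂ (S ω)) ω ≤ x}).toReal =
        (if 0 ≤ x then 0.9925 else 0) + (if f₂ 2 ≤ x then 0.0025 else 0)
        + (if f₂ 2 ≤ x then 0.0025 else 0) + (if f₂ 4 ≤ x then 0.0025 else 0) :=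
      F_eval μ A₁ₐ A₁ᵦ A₂ hmₐ hmᵦ hm₂ dab da2 db2 hpₐ hpᵦ hp₂ (f₂ 2) (f₂ 2) (f₂ 4) _
        (fun ω hω => by rw [hSa ω hω]) (fun ω hω => by rw [hSb ω hω])
        (fun ω hω => by rw [hS2 ω hω]) (fun ω hω => by rw [hS0 ω hω, hf20])
    -- the VaR constraint forces f₁ 2 = f₂ 2 = 1
    have hle1 : f₁ 2 ≤ 1 := by
      have h := VaR_ge_of μ (fun ω => f₁ (S ω)) 0.995 (f₁ 2)
        (fun x hx => by rw [G₁ x]; split_ifs <;> linarith)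
        ⟨f₁ 4, by rw [G₁ (f₁ 4)]; split_ifs <;> linarith⟩
      linarith [hv₁, h]
    have hle2 : f₂ 2 ≤ 1 := by
      have h := VaR_ge_of μ (fun ω => f₂ (S ω)) 0.995 (f₂ 2)
        (fun x hx => by rw [G₂ x]; split_ifs <;> linarith)
        ⟨f₂ 4, by rw [G₂ (f₂ 4)]; split_ifs <;> linarith⟩
      linarith [hv₂, h]
    have e₁ : f₁ 2 = 1 := by linarith
    have e₂ : f₂ 2 = 1 := by linarith
    have hc1 : (1:ℝ) ≤ f₁ 4 := by linarith
    have hc2 : (1:ℝ) ≤ f₂ 4 := by linarith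
    -- VaR values for Y₁ = f₁ ∘ S
    have W₁c : ∀ α : ℝ, 0.9975 < α → α ≤ 1 → VaR μ (fun ω => f₁ (S ω)) α = f₁ 4 := by
      intro α hα1 hα2
      refine VaR_eq_of μ _ α (f₁ 4) (fun x hx => ?_) (fun x hx => ?_) <;>
        rw [G₁ x] <;> split_ifs <;> linarith
    have W₁1 : ∀ α : ℝ, 0.9925 < α → α ≤ 0.9975 → VaR μ (fun ω => f₁ (S ω)) α = 1 := by
      intro α hα1 hα2
      refine VaR_eq_of μ _ α 1 (fun x hx => ?_) (fun x hx => ?_) <;>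
        rw [G₁ x] <;> split_ifs <;> linarith
    have W₁0 : ∀ α : ℝ, 0 < α → α ≤ 0.9925 → VaR μ (fun ω => f₁ (S ω)) α = 0 := by
      intro α hα1 hα2
      refine VaR_eq_of μ _ α 0 (fun x hx => ?_) (fun x hx => ?_) <;>
        rw [G₁ x] <;> split_ifs <;> linarith
    have W₂c : ∀ α : ℝ, 0.9975 < α → α ≤ 1 → VaR μ (fun ω => f₂ (S ω)) α = f₂ 4 := by
      intro α hα1 hα2
      refine VaR_eq_of μ _ α (f₂ 4) (fun x hx => ?_) (fun x hx => ?_) <;>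
        rw [G₂ x] <;> split_ifs <;> linarith
    have W₂1 : ∀ α : ℝ, 0.9925 < α → α ≤ 0.9975 → VaR μ (fun ω => f₂ (S ω)) α = 1 := by
      intro α hα1 hα2
      refine VaR_eq_of μ _ α 1 (fun x hx => ?_) (fun x hx => ?_) <;>
        rw [G₂ x] <;> split_ifs <;> linarith
    -- ES of Y₁ at 0.01
    have p1 : ∀ u ∈ Set.Ioo (0:ℝ) 0.0025, VaR μ (fun ω => f₁ (S ω)) (1 - u) = f₁ 4 := by
      intro u hu; exact W₁c _ (by linarith [hu.2]) (by linarith [hu.1])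
    have p2 : ∀ u ∈ Set.Ioo (0.0025:ℝ) 0.0075, VaR μ (fun ω => f₁ (S ω)) (1 - u) = 1 := by
      intro u hu; exact W₁1 _ (by linarith [hu.2]) (by linarith [hu.1])
    have p3 : ∀ u ∈ Set.Ioo (0.0075:ℝ) 0.01, VaR μ (fun ω => f₁ (S ω)) (1 - u) = 0 := by
      intro u hu; exact W₁0 _ (by linarith [hu.2]) (by linarith [hu.1])
    have pp1 := step_integrable (show (0:ℝ) ≤ 0.0025 by norm_num) p1
    have pp2 := step_integrable (show (0.0025:ℝ) ≤ 0.0075 by norm_num) p2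
    have pp3 := step_integrable (show (0.0075:ℝ) ≤ 0.01 by norm_num) p3
    have hintY₁ : ∫ u in (0:ℝ)..0.01, VaR μ (fun ω => f₁ (S ω)) (1 - u)
        = 0.0025 * f₁ 4 + 0.005 := by
      rw [← intervalIntegral.integral_add_adjacent_intervals (pp1.trans pp2) pp3,
        ← intervalIntegral.integral_add_adjacent_intervals pp1 pp2,
        step_integral (by norm_num) p1, step_integral (by norm_num) p2,
        step_integral (by norm_num) p3]
      ring
    have q1 : ∀ u ∈ Set.Ioo (0:ℝ) 0.0025, VaR μ (fun ω => f₂ (S ω)) (1 - u) = f₂ 4 := by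
      intro u hu; exact W₂c _ (by linarith [hu.2]) (by linarith [hu.1])
    have q2 : ∀ u ∈ Set.Ioo (0.0025:ℝ) 0.0075, VaR μ (fun ω => f₂ (S ω)) (1 - u) = 1 := by
      intro u hu; exact W₂1 _ (by linarith [hu.2]) (by linarith [hu.1])
    have qq1 := step_integrable (show (0:ℝ) ≤ 0.0025 by norm_num) q1
    have qq2 := step_integrable (show (0.0025:ℝ) ≤ 0.0075 by norm_num) q2
    have hintY₂ : ∫ u in (0:ℝ)..0.0075, VaR μ (fun ω => f₂ (S ω)) (1 - u)
        = 0.0025 * f₂ 4 + 0.005 := by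
      rw [← intervalIntegral.integral_add_adjacent_intervals qq1 qq2,
        step_integral (by norm_num) q1, step_integral (by norm_num) q2]
      ring
    have hESY₁ : ES μ (fun ω => f₁ (S ω)) 0.01 = f₁ 4 / 4 + 1/2 := by
      rw [ES, hintY₁]; ring_nf
    have hESY₂ : ES μ (fun ω => f₂ (S ω)) 0.0075 = f₂ 4 / 3 + 2/3 := by
      rw [ES, hintY₂]; ring_nf
    rw [hESY₁, hESY₂]
    linarith
end

section
/- Fix s ∈ ℝ, constants cᵢ ∈ ℝ, δᵢ > 0, and bounds Lᵢ ∈ [−∞, ∞), Uᵢ ∈ (−∞, ∞] with Lᵢ ≤ Uᵢ and ∑Lᵢ ≤ s ≤ ∑Uᵢ. The program min ∑ᵢ δᵢ(xᵢ − cᵢ)² subject to ∑xᵢ = s and Lᵢ ≤ xᵢ ≤ Uᵢ has a unique minimizer, and x is the minimizer if and only if there exists η ∈ ℝ with xᵢ = Πᵢ(cᵢ + δᵢ⁻¹η) for every i and ∑ᵢ Πᵢ(cᵢ + δᵢ⁻¹η) = s, where Πᵢ(y) = min{Uᵢ, max{Lᵢ, y}}. -/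
/-- Clip a real number to the (possibly infinite) interval `[l, u]`. -/
noncomputable def clipEReal (l u : EReal) (y : ℝ) : ℝ :=
  (max l (min u (y : EReal))).toReal

/-- Feasibility for the statewise quadratic program: clearing plus box bounds. -/
def QPFeasible {n : ℕ} (L U : Fin n → EReal) (s : ℝ) (x : Fin n → ℝ) : Prop :=
  (∑ i, x i = s) ∧ ∀ i, L i ≤ (x i : EReal) ∧ (x i : EReal) ≤ U i

namespace Stmt15Aux

variable {l u : EReal}

lemma coe_clip (hl : l ≠ ⊤) (hu : u ≠ ⊥) (y : ℝ) :
    ((clipEReal l u y : ℝ) : EReal) = max l (min u (y : EReal)) := by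
  apply EReal.coe_toReal
  · exact (max_lt hl.lt_top (lt_of_le_of_lt (min_le_right _ _) (EReal.coe_lt_top y))).ne
  · exact (lt_of_lt_of_le (lt_min hu.bot_lt (EReal.bot_lt_coe y)) (le_max_right _ _)).ne'

lemma clip_mem (hl : l ≠ ⊤) (hu : u ≠ ⊥) (hlu : l ≤ u) (y : ℝ) :
    l ≤ ((clipEReal l u y : ℝ) : EReal) ∧ ((clipEReal l u y : ℝ) : EReal) ≤ u := by
  rw [coe_clip hl hu]
  exact ⟨le_max_left _ _, max_le hlu (min_le_left _ _)⟩

/-- Projection inequality: the clip is the projection on `[l,u]`. -/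
lemma proj_ineq (hl : l ≠ ⊤) (hu : u ≠ ⊥) (hlu : l ≤ u) (y z : ℝ)
    (hz1 : l ≤ (z : EReal)) (hz2 : (z : EReal) ≤ u) :
    (y - clipEReal l u y) * (z - clipEReal l u y) ≤ 0 := by
  set p := clipEReal l u y with hp
  have hc := coe_clip hl hu y
  rcases lt_or_ge (y : EReal) l with h | h
  · -- p = l, y < p, z ≥ p
    have hlb : l ≠ ⊥ := fun hb => by simp [hb] at h
    have hcl : ((p : ℝ) : EReal) = l := by
      rw [hc, min_eq_right (h.le.trans hlu), max_eq_left h.le]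
    have h1 : y < p := by
      rw [← EReal.coe_lt_coe_iff, hcl]; exact h
    have h2 : p ≤ z := by
      rw [← EReal.coe_le_coe_iff, hcl]; exact hz1
    nlinarith
  · rcases lt_or_ge u (y : EReal) with h' | h'
    · -- p = u, y > p, z ≤ p
      have hcu : ((p : ℝ) : EReal) = u := by
        rw [hc, min_eq_left h'.le, max_eq_right hlu]
      have h1 : p < y := by
        rw [← EReal.coe_lt_coe_iff, hcu]; exact h'
      have h2 : z ≤ p := by
        rw [← EReal.coe_le_coe_iff, hcu]; exact hz2
      nlinarith
    · -- p = y
      have hcy : ((p : ℝ) : EReal) = (y : EReal) := by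
        rw [hc, min_eq_right h', max_eq_right h]
      have : p = y := EReal.coe_eq_coe_iff.mp hcy
      rw [this]; simp

lemma clip_mono (hl : l ≠ ⊤) (hu : u ≠ ⊥) (hlu : l ≤ u) {y₁ y₂ : ℝ} (h : y₁ ≤ y₂) :
    clipEReal l u y₁ ≤ clipEReal l u y₂ := by
  have m1 := clip_mem hl hu hlu y₁
  have m2 := clip_mem hl hu hlu y₂
  have h1 := proj_ineq hl hu hlu y₁ (clipEReal l u y₂) m2.1 m2.2
  have h2 := proj_ineq hl hu hlu y₂ (clipEReal l u y₁) m1.1 m1.2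
  nlinarith

lemma clip_lipschitz (hl : l ≠ ⊤) (hu : u ≠ ⊥) (hlu : l ≤ u) (y₁ y₂ : ℝ) :
    |clipEReal l u y₁ - clipEReal l u y₂| ≤ |y₁ - y₂| := by
  have m1 := clip_mem hl hu hlu y₁
  have m2 := clip_mem hl hu hlu y₂
  have h1 := proj_ineq hl hu hlu y₁ (clipEReal l u y₂) m2.1 m2.2
  have h2 := proj_ineq hl hu hlu y₂ (clipEReal l u y₁) m1.1 m1.2
  set p₁ := clipEReal l u y₁
  set p₂ := clipEReal l u y₂
  have key : (p₁ - p₂) ^ 2 ≤ (y₁ - y₂) * (p₁ - p₂) := by nlinarith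
  rcases eq_or_ne p₁ p₂ with h | h
  · simp [h]
  · have hpos : 0 < |p₁ - p₂| := abs_pos.mpr (sub_ne_zero.mpr h)
    have : |p₁ - p₂| * |p₁ - p₂| ≤ |y₁ - y₂| * |p₁ - p₂| := by
      calc |p₁ - p₂| * |p₁ - p₂| = (p₁ - p₂) ^ 2 := by rw [← abs_mul, ← sq, abs_sq]
        _ ≤ (y₁ - y₂) * (p₁ - p₂) := key
        _ ≤ |(y₁ - y₂) * (p₁ - p₂)| := le_abs_self _
        _ = |y₁ - y₂| * |p₁ - p₂| := abs_mul _ _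
    exact le_of_mul_le_mul_right this hpos

lemma clip_continuous (hl : l ≠ ⊤) (hu : u ≠ ⊥) (hlu : l ≤ u) :
    Continuous (clipEReal l u) := by
  apply LipschitzWith.continuous (K := 1)
  intro a b
  rw [edist_dist, edist_dist, Real.dist_eq, Real.dist_eq]
  simp only [ENNReal.coe_one, one_mul]
  exact ENNReal.ofReal_le_ofReal (clip_lipschitz hl hu hlu a b)

lemma clip_le_self (hu : u ≠ ⊥) (y : ℝ) : clipEReal ⊥ u y ≤ y := by
  rw [← EReal.coe_le_coe_iff, coe_clip (by simp) hu]
  simpa using min_le_right u (y : EReal)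

lemma self_le_clip (hl : l ≠ ⊤) (y : ℝ) : y ≤ clipEReal l ⊤ y := by
  rw [← EReal.coe_le_coe_iff, coe_clip hl (by simp)]
  simpa using le_max_right l (y : EReal)

lemma main_key {n : ℕ} (c δ : Fin n → ℝ) (hδ : ∀ i, 0 < δ i)
    (L U : Fin n → EReal) (hL : ∀ i, L i ≠ ⊤) (hU : ∀ i, U i ≠ ⊥)
    (hLU : ∀ i, L i ≤ U i) (s : ℝ) (η : ℝ)
    (hη : (∑ i, clipEReal (L i) (U i) (c i + η / δ i)) = s) :
    QPFeasible L U s (fun i => clipEReal (L i) (U i) (c i + η / δ i)) ∧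
    ∀ y : Fin n → ℝ, QPFeasible L U s y →
      (∑ i, δ i * (clipEReal (L i) (U i) (c i + η / δ i) - c i) ^ 2)
        + ∑ i, δ i * (y i - clipEReal (L i) (U i) (c i + η / δ i)) ^ 2
        ≤ ∑ i, δ i * (y i - c i) ^ 2 := by
  set x : Fin n → ℝ := fun i => clipEReal (L i) (U i) (c i + η / δ i) with hx
  constructor
  · exact ⟨hη, fun i => clip_mem (hL i) (hU i) (hLU i) _⟩
  · intro y hy
    have key : ∀ i, δ i * (x i - c i) ^ 2 + 2 * η * (y i - x i) + δ i * (y i - x i) ^ 2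
        ≤ δ i * (y i - c i) ^ 2 := by
      intro i
      have h := proj_ineq (hL i) (hU i) (hLU i) (c i + η / δ i) (y i) (hy.2 i).1 (hy.2 i).2
      have h' : δ i * ((c i + η / δ i - x i) * (y i - x i)) ≤ 0 :=
        mul_nonpos_of_nonneg_of_nonpos (hδ i).le h
      have hdiv : δ i * (η / δ i) = η := by
        rw [mul_comm, div_mul_cancel₀ _ (hδ i).ne']
      have h'' : (δ i * c i + η - δ i * x i) * (y i - x i) ≤ 0 := by
        have expand : δ i * ((c i + η / δ i - x i) * (y i - x i))
            = (δ i * c i + δ i * (η / δ i) - δ i * x i) * (y i - x i) := by ring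
        rw [expand, hdiv] at h'
        exact h'
      nlinarith [h'']
    have hsum := Finset.sum_le_sum (s := Finset.univ) (fun i _ => key i)
    have hlin : ∑ i, (2 * η * (y i - x i)) = 0 := by
      calc ∑ i, 2 * η * (y i - x i) = 2 * η * ∑ i, (y i - x i) := by rw [Finset.mul_sum]
        _ = 2 * η * (∑ i, y i - ∑ i, x i) := by rw [Finset.sum_sub_distrib]
        _ = 0 := by rw [hy.1, hη]; ring
    calc (∑ i, δ i * (x i - c i) ^ 2) + ∑ i, δ i * (y i - x i) ^ 2
        = ∑ i, (δ i * (x i - c i) ^ 2 + 2 * η * (y i - x i) + δ i * (y i - x i) ^ 2) := by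
          rw [Finset.sum_add_distrib, Finset.sum_add_distrib, hlin, add_zero]
      _ ≤ ∑ i, δ i * (y i - c i) ^ 2 := hsum

lemma exists_lo {n : ℕ} (c δ : Fin n → ℝ) (hδ : ∀ i, 0 < δ i)
    (L U : Fin n → EReal) (hL : ∀ i, L i ≠ ⊤) (hU : ∀ i, U i ≠ ⊥)
    (hLU : ∀ i, L i ≤ U i) (s : ℝ) (hsL : (∑ i, L i) ≤ (s : EReal)) :
    ∃ η : ℝ, (∑ i, clipEReal (L i) (U i) (c i + η / δ i)) ≤ s := by
  by_cases hb : ∀ i, L i ≠ ⊥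
  · -- all lower bounds finite
    obtain ⟨M, hM⟩ := Finite.exists_le (fun i => -(δ i * ((L i).toReal - c i)))
    refine ⟨min 0 (-M), ?_⟩
    have hclip : ∀ i, clipEReal (L i) (U i) (c i + min 0 (-M) / δ i) = (L i).toReal := by
      intro i
      have hle : c i + min 0 (-M) / δ i ≤ (L i).toReal := by
        have h1 : min 0 (-M) ≤ δ i * ((L i).toReal - c i) :=
          (min_le_right _ _).trans (by linarith [hM i])
        have h2 : min 0 (-M) / δ i ≤ (L i).toReal - c i :=
          (div_le_iff₀ (hδ i)).mpr (by rw [mul_comm]; exact h1)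
        linarith
      have hyL : ((c i + min 0 (-M) / δ i : ℝ) : EReal) ≤ L i := by
        rw [← EReal.coe_toReal (hL i) (hb i)]
        exact_mod_cast hle
      rw [← EReal.coe_eq_coe_iff, coe_clip (hL i) (hU i),
        min_eq_right (hyL.trans (hLU i)), max_eq_left hyL, EReal.coe_toReal (hL i) (hb i)]
    rw [Finset.sum_congr rfl (fun i _ => hclip i)]
    have hcast : (∑ i, L i) = ((∑ i, (L i).toReal : ℝ) : EReal) := by
      have hm : ((∑ i, (L i).toReal : ℝ) : EReal) = ∑ i, (((L i).toReal : ℝ) : EReal) :=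
        map_sum (⟨⟨Real.toEReal, EReal.coe_zero⟩, EReal.coe_add⟩ : ℝ →+ EReal) _ Finset.univ
      rw [hm]
      exact (Finset.sum_congr rfl (fun i _ => (EReal.coe_toReal (hL i) (hb i)))).symm
    rw [hcast] at hsL
    exact_mod_cast hsL
  · push_neg at hb
    obtain ⟨i₀, hi₀⟩ := hb
    set C : ℝ := ∑ j ∈ Finset.univ.erase i₀, clipEReal (L j) (U j) (c j) with hC
    refine ⟨min 0 (δ i₀ * (s - C - c i₀)), ?_⟩
    set η := min 0 (δ i₀ * (s - C - c i₀)) with hηdef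
    have hη0 : η ≤ 0 := min_le_left _ _
    have hsplit : (∑ i, clipEReal (L i) (U i) (c i + η / δ i))
        = clipEReal (L i₀) (U i₀) (c i₀ + η / δ i₀)
          + ∑ j ∈ Finset.univ.erase i₀, clipEReal (L j) (U j) (c j + η / δ j) :=
      (Finset.add_sum_erase _ _ (Finset.mem_univ i₀)).symm
    have h1 : clipEReal (L i₀) (U i₀) (c i₀ + η / δ i₀) ≤ c i₀ + η / δ i₀ := by
      rw [hi₀]
      exact clip_le_self (hU i₀) _
    have h2 : ∀ j ∈ Finset.univ.erase i₀,
        clipEReal (L j) (U j) (c j + η / δ j) ≤ clipEReal (L j) (U j) (c j) := by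
      intro j _
      apply clip_mono (hL j) (hU j) (hLU j)
      have : η / δ j ≤ 0 := div_nonpos_of_nonpos_of_nonneg hη0 (hδ j).le
      linarith
    have h3 : η / δ i₀ ≤ s - C - c i₀ := by
      rw [div_le_iff₀ (hδ i₀)]
      calc η ≤ δ i₀ * (s - C - c i₀) := min_le_right _ _
        _ = _ := mul_comm _ _
    calc (∑ i, clipEReal (L i) (U i) (c i + η / δ i))
        ≤ (c i₀ + η / δ i₀) + C := by
          rw [hsplit]; exact add_le_add h1 (Finset.sum_le_sum h2)
      _ ≤ s := by linarith

lemma exists_hi {n : ℕ} (c δ : Fin n → ℝ) (hδ : ∀ i, 0 < δ i)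
    (L U : Fin n → EReal) (hL : ∀ i, L i ≠ ⊤) (hU : ∀ i, U i ≠ ⊥)
    (hLU : ∀ i, L i ≤ U i) (s : ℝ) (hsU : (s : EReal) ≤ ∑ i, U i) :
    ∃ η : ℝ, s ≤ ∑ i, clipEReal (L i) (U i) (c i + η / δ i) := by
  by_cases hb : ∀ i, U i ≠ ⊤
  · obtain ⟨M, hM⟩ := Finite.exists_le (fun i => δ i * ((U i).toReal - c i))
    refine ⟨max 0 M, ?_⟩
    have hclip : ∀ i, clipEReal (L i) (U i) (c i + max 0 M / δ i) = (U i).toReal := by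
      intro i
      have h1 : δ i * ((U i).toReal - c i) ≤ max 0 M := (hM i).trans (le_max_right _ _)
      have h2 : (U i).toReal - c i ≤ max 0 M / δ i :=
        (le_div_iff₀ (hδ i)).mpr (by rw [mul_comm]; exact h1)
      have hle : (U i).toReal ≤ c i + max 0 M / δ i := by linarith
      have hyU : U i ≤ ((c i + max 0 M / δ i : ℝ) : EReal) := by
        rw [← EReal.coe_toReal (hb i) (hU i)]
        exact_mod_cast hle
      rw [← EReal.coe_eq_coe_iff, coe_clip (hL i) (hU i),
        min_eq_left hyU, max_eq_right (hLU i), EReal.coe_toReal (hb i) (hU i)]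
    rw [Finset.sum_congr rfl (fun i _ => hclip i)]
    have hcast : (∑ i, U i) = ((∑ i, (U i).toReal : ℝ) : EReal) := by
      have hm : ((∑ i, (U i).toReal : ℝ) : EReal) = ∑ i, (((U i).toReal : ℝ) : EReal) :=
        map_sum (⟨⟨Real.toEReal, EReal.coe_zero⟩, EReal.coe_add⟩ : ℝ →+ EReal) _ Finset.univ
      rw [hm]
      exact (Finset.sum_congr rfl (fun i _ => (EReal.coe_toReal (hb i) (hU i)))).symm
    rw [hcast] at hsU
    exact_mod_cast hsU
  · push_neg at hb
    obtain ⟨i₀, hi₀⟩ := hb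
    set C : ℝ := ∑ j ∈ Finset.univ.erase i₀, clipEReal (L j) (U j) (c j) with hC
    refine ⟨max 0 (δ i₀ * (s - C - c i₀)), ?_⟩
    set η := max 0 (δ i₀ * (s - C - c i₀)) with hηdef
    have hη0 : 0 ≤ η := le_max_left _ _
    have hsplit : (∑ i, clipEReal (L i) (U i) (c i + η / δ i))
        = clipEReal (L i₀) (U i₀) (c i₀ + η / δ i₀)
          + ∑ j ∈ Finset.univ.erase i₀, clipEReal (L j) (U j) (c j + η / δ j) :=
      (Finset.add_sum_erase _ _ (Finset.mem_univ i₀)).symm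
    have h1 : c i₀ + η / δ i₀ ≤ clipEReal (L i₀) (U i₀) (c i₀ + η / δ i₀) := by
      rw [hi₀]
      exact self_le_clip (hL i₀) _
    have h2 : ∀ j ∈ Finset.univ.erase i₀,
        clipEReal (L j) (U j) (c j) ≤ clipEReal (L j) (U j) (c j + η / δ j) := by
      intro j _
      apply clip_mono (hL j) (hU j) (hLU j)
      have : 0 ≤ η / δ j := div_nonneg hη0 (hδ j).le
      linarith
    have h3 : s - C - c i₀ ≤ η / δ i₀ := by
      rw [le_div_iff₀ (hδ i₀)]
      calc (s - C - c i₀) * δ i₀ = δ i₀ * (s - C - c i₀) := mul_comm _ _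
        _ ≤ η := le_max_right _ _
    calc s ≤ (c i₀ + η / δ i₀) + C := by linarith
      _ ≤ ∑ i, clipEReal (L i) (U i) (c i + η / δ i) := by
          rw [hsplit]; exact add_le_add h1 (Finset.sum_le_sum h2)

end Stmt15Aux

open Stmt15Aux in
/-- The statewise quadratic program `min ∑ δᵢ(xᵢ-cᵢ)²` subject to `∑xᵢ = s`,
`Lᵢ ≤ xᵢ ≤ Uᵢ` has a unique minimizer, characterized by the existence of a
multiplier `η` with `xᵢ = Πᵢ(cᵢ + δᵢ⁻¹η)` and clearing of the clipped vector. -/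
theorem stmt15 {n : ℕ} (c δ : Fin n → ℝ) (hδ : ∀ i, 0 < δ i)
    (L U : Fin n → EReal) (hL : ∀ i, L i ≠ ⊤) (hU : ∀ i, U i ≠ ⊥)
    (hLU : ∀ i, L i ≤ U i) (s : ℝ)
    (hsL : (∑ i, L i) ≤ (s : EReal)) (hsU : (s : EReal) ≤ ∑ i, U i) :
    (∃! x : Fin n → ℝ, QPFeasible L U s x ∧
      ∀ y : Fin n → ℝ, QPFeasible L U s y →
        (∑ i, δ i * (x i - c i) ^ 2) ≤ ∑ i, δ i * (y i - c i) ^ 2) ∧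
    ∀ x : Fin n → ℝ,
      (QPFeasible L U s x ∧
        ∀ y : Fin n → ℝ, QPFeasible L U s y →
          (∑ i, δ i * (x i - c i) ^ 2) ≤ ∑ i, δ i * (y i - c i) ^ 2) ↔
      (∃ η : ℝ, (∀ i, x i = clipEReal (L i) (U i) (c i + η / δ i)) ∧
        (∑ i, clipEReal (L i) (U i) (c i + η / δ i)) = s) := by
  obtain ⟨η₀, hη₀⟩ := exists_lo c δ hδ L U hL hU hLU s hsL
  obtain ⟨η₁, hη₁⟩ := exists_hi c δ hδ L U hL hU hLU s hsU
  set f : ℝ → ℝ := fun η => ∑ i, clipEReal (L i) (U i) (c i + η / δ i) with hf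
  have hcont : Continuous f := by
    apply continuous_finset_sum
    intro i _
    exact (clip_continuous (hL i) (hU i) (hLU i)).comp (by continuity)
  have hmem : s ∈ Set.uIcc (f η₀) (f η₁) := Set.mem_uIcc.mpr (Or.inl ⟨hη₀, hη₁⟩)
  obtain ⟨η, -, hη⟩ := intermediate_value_uIcc hcont.continuousOn hmem
  obtain ⟨hfeas₀, hmin₀⟩ := main_key c δ hδ L U hL hU hLU s η hη
  set x₀ : Fin n → ℝ := fun i => clipEReal (L i) (U i) (c i + η / δ i) with hx₀
  have hnn : ∀ y : Fin n → ℝ, 0 ≤ ∑ i, δ i * (y i - x₀ i) ^ 2 :=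
    fun y => Finset.sum_nonneg fun i _ => mul_nonneg (hδ i).le (sq_nonneg _)
  have hopt₀ : ∀ y, QPFeasible L U s y →
      (∑ i, δ i * (x₀ i - c i) ^ 2) ≤ ∑ i, δ i * (y i - c i) ^ 2 := by
    intro y hy
    have := hmin₀ y hy
    linarith [hnn y]
  have huniq : ∀ x, QPFeasible L U s x →
      (∑ i, δ i * (x i - c i) ^ 2) ≤ ∑ i, δ i * (x₀ i - c i) ^ 2 → x = x₀ := by
    intro x hx hle
    have h := hmin₀ x hx
    have hz : ∑ i, δ i * (x i - x₀ i) ^ 2 = 0 :=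
      le_antisymm (by linarith) (hnn x)
    funext i
    have hterm := (Finset.sum_eq_zero_iff_of_nonneg
      (fun i _ => mul_nonneg (hδ i).le (sq_nonneg (x i - x₀ i)))).mp hz i (Finset.mem_univ i)
    have h2 : (x i - x₀ i) ^ 2 = 0 := by
      rcases mul_eq_zero.mp hterm with h | h
      · exact absurd h (hδ i).ne'
      · exact h
    exact sub_eq_zero.mp (sq_eq_zero_iff.mp h2)
  constructor
  · exact ⟨x₀, ⟨hfeas₀, hopt₀⟩, fun x ⟨hxf, hxm⟩ => huniq x hxf (hxm x₀ hfeas₀)⟩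
  · intro x
    constructor
    · rintro ⟨hxf, hxm⟩
      have hx := huniq x hxf (hxm x₀ hfeas₀)
      exact ⟨η, fun i => by rw [hx], hη⟩
    · rintro ⟨η', hx', hs'⟩
      obtain ⟨hfeas', hmin'⟩ := main_key c δ hδ L U hL hU hLU s η' hs'
      have hxeq : x = fun i => clipEReal (L i) (U i) (c i + η' / δ i) := funext hx'
      constructor
      · rw [hxeq]; exact hfeas'
      · intro y hy
        rw [hxeq]
        have := hmin' y hy
        have hnn' : 0 ≤ ∑ i, δ i * (y i - clipEReal (L i) (U i) (c i + η' / δ i)) ^ 2 :=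
          Finset.sum_nonneg fun i _ => mul_nonneg (hδ i).le (sq_nonneg _)
        linarith
end

section
/- For constants cᵢ ∈ ℝ, δᵢ > 0, Lᵢ ≤ Uᵢ (extended reals), the function H(η) = ∑ᵢ min{Uᵢ, max{Lᵢ, cᵢ + δᵢ⁻¹η}} is continuous and nondecreasing in η ∈ ℝ, and for any s with ∑Lᵢ < s < ∑Uᵢ the preimage H⁻¹({s}) is a nonempty closed interval; moreover the clipped vector (Πᵢ(cᵢ + δᵢ⁻¹η))ᵢ is constant as η ranges over H⁻¹({s}). -/
lemma ecoe_min' (b y : ℝ) : ((min b y : ℝ) : EReal) = min (b:EReal) y :=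
  EReal.coe_strictMono.monotone.map_min
lemma ecoe_max' (b y : ℝ) : ((max b y : ℝ) : EReal) = max (b:EReal) y :=
  EReal.coe_strictMono.monotone.map_max

lemma ecoe_sum' {n : ℕ} (f : Fin n → ℝ) : ((∑ i, f i : ℝ) : EReal) = ∑ i, (f i : EReal) :=
  map_sum (⟨⟨(Real.toEReal), EReal.coe_zero⟩, EReal.coe_add⟩ : ℝ →+ EReal) f Finset.univ

lemma clip_cases (l u : EReal) (hl : l ≠ ⊤) (hu : u ≠ ⊥) (hlu : l ≤ u) :
    (l = ⊥ ∧ u = ⊤ ∧ ∀ y, clipEReal l u y = y) ∨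
    (∃ b : ℝ, l = ⊥ ∧ u = (b:EReal) ∧ ∀ y, clipEReal l u y = min b y) ∨
    (∃ a : ℝ, l = (a:EReal) ∧ u = ⊤ ∧ ∀ y, clipEReal l u y = max a y) ∨
    (∃ a b : ℝ, l = (a:EReal) ∧ u = (b:EReal) ∧ a ≤ b ∧
      ∀ y, clipEReal l u y = max a (min b y)) := by
  induction l using EReal.rec with
  | top => exact absurd rfl hl
  | bot =>
    induction u using EReal.rec with
    | bot => exact absurd rfl hu
    | top => exact Or.inl ⟨rfl, rfl, fun y => by simp [clipEReal]⟩
    | coe b =>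
      exact Or.inr <| Or.inl ⟨b, rfl, rfl, fun y => by
        rw [clipEReal, max_eq_right bot_le, ← ecoe_min', EReal.toReal_coe]⟩
  | coe a =>
    induction u using EReal.rec with
    | bot => exact absurd rfl hu
    | top =>
      exact Or.inr <| Or.inr <| Or.inl ⟨a, rfl, rfl, fun y => by
        rw [clipEReal, min_eq_right le_top, ← ecoe_max', EReal.toReal_coe]⟩
    | coe b =>
      exact Or.inr <| Or.inr <| Or.inr ⟨a, b, rfl, rfl, by exact_mod_cast hlu, fun y => by
        rw [clipEReal, ← ecoe_min', ← ecoe_max', EReal.toReal_coe]⟩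

section clipProps
variable {l u : EReal}

lemma clip_mono (hl : l ≠ ⊤) (hu : u ≠ ⊥) (hlu : l ≤ u) : Monotone (clipEReal l u) := by
  rcases clip_cases l u hl hu hlu with ⟨_, _, h⟩ | ⟨b, _, _, h⟩ | ⟨a, _, _, h⟩ |
    ⟨a, b, _, _, _, h⟩ <;> intro y z hyz <;> rw [h, h]
  · exact hyz
  · exact min_le_min le_rfl hyz
  · exact max_le_max le_rfl hyz
  · exact max_le_max le_rfl (min_le_min le_rfl hyz)

lemma clip_cont (hl : l ≠ ⊤) (hu : u ≠ ⊥) (hlu : l ≤ u) : Continuous (clipEReal l u) := by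
  rcases clip_cases l u hl hu hlu with ⟨_, _, h⟩ | ⟨b, _, _, h⟩ | ⟨a, _, _, h⟩ |
    ⟨a, b, _, _, _, h⟩ <;> rw [show clipEReal l u = _ from funext h]
  · exact continuous_id
  · exact continuous_const.min continuous_id
  · exact continuous_const.max continuous_id
  · exact continuous_const.max (continuous_const.min continuous_id)

lemma clip_le_self (hl : l ≠ ⊤) (hu : u ≠ ⊥) (hlu : l ≤ u) (hb : l = ⊥) (y : ℝ) : clipEReal l u y ≤ y := by
  rcases clip_cases l u hl hu hlu with ⟨_, _, h⟩ | ⟨b, _, _, h⟩ | ⟨a, ha, _, h⟩ |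
    ⟨a, b, ha, _, _, h⟩
  · rw [h]
  · rw [h]; exact min_le_right _ _
  · exact absurd (ha ▸ hb) (EReal.coe_ne_bot a)
  · exact absurd (ha ▸ hb) (EReal.coe_ne_bot a)

lemma self_le_clip (hl : l ≠ ⊤) (hu : u ≠ ⊥) (hlu : l ≤ u) (ht : u = ⊤) (y : ℝ) : y ≤ clipEReal l u y := by
  rcases clip_cases l u hl hu hlu with ⟨_, _, h⟩ | ⟨b, _, hb, h⟩ | ⟨a, _, _, h⟩ |
    ⟨a, b, _, hb, _, h⟩
  · rw [h]
  · exact absurd (hb ▸ ht) (EReal.coe_ne_top b)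
  · rw [h]; exact le_max_right _ _
  · exact absurd (hb ▸ ht) (EReal.coe_ne_top b)

lemma clip_eq_left (hl : l ≠ ⊤) (hu : u ≠ ⊥) (hlu : l ≤ u) {a : ℝ} (ha : l = (a : EReal)) {y : ℝ} (hy : y ≤ a) :
    clipEReal l u y = a := by
  rcases clip_cases l u hl hu hlu with ⟨hb, _, h⟩ | ⟨b, hb, _, h⟩ | ⟨a', ha', _, h⟩ |
    ⟨a', b, ha', _, hab, h⟩
  · exact absurd (ha ▸ hb) (EReal.coe_ne_bot a)
  · exact absurd (ha ▸ hb) (EReal.coe_ne_bot a)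
  · obtain rfl : a' = a := by rw [ha] at ha'; exact_mod_cast ha'.symm
    rw [h, max_eq_left hy]
  · obtain rfl : a' = a := by rw [ha] at ha'; exact_mod_cast ha'.symm
    rw [h, min_eq_right (hy.trans hab), max_eq_left hy]

lemma clip_eq_right (hl : l ≠ ⊤) (hu : u ≠ ⊥) (hlu : l ≤ u) {b : ℝ} (hb : u = (b : EReal)) {y : ℝ} (hy : b ≤ y) :
    clipEReal l u y = b := by
  rcases clip_cases l u hl hu hlu with ⟨_, ht, h⟩ | ⟨b', _, hb', h⟩ | ⟨a, _, ht, h⟩ |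
    ⟨a, b', _, hb', hab, h⟩
  · exact absurd (hb ▸ ht) (EReal.coe_ne_top b)
  · obtain rfl : b' = b := by rw [hb] at hb'; exact_mod_cast hb'.symm
    rw [h, min_eq_left hy]
  · exact absurd (hb ▸ ht) (EReal.coe_ne_top b)
  · obtain rfl : b' = b := by rw [hb] at hb'; exact_mod_cast hb'.symm
    rw [h, min_eq_left hy, max_eq_right hab]

end clipProps

/-- The aggregate clipped response `H(η) = ∑ᵢ Πᵢ(cᵢ + δᵢ⁻¹η)` is continuous and
nondecreasing; for `∑Lᵢ < s < ∑Uᵢ` its level set `H⁻¹({s})` is a nonempty closed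
interval, on which the clipped vector is constant. -/
theorem stmt16 {n : ℕ} (c δ : Fin n → ℝ) (hδ : ∀ i, 0 < δ i)
    (L U : Fin n → EReal) (hL : ∀ i, L i ≠ ⊤) (hU : ∀ i, U i ≠ ⊥)
    (hLU : ∀ i, L i ≤ U i)
    (H : ℝ → ℝ)
    (hH : H = fun η => ∑ i, clipEReal (L i) (U i) (c i + η / δ i)) :
    Continuous H ∧ Monotone H ∧
    ∀ s : ℝ, (∑ i, L i) < (s : EReal) → (s : EReal) < (∑ i, U i) →
      (H ⁻¹' {s}).Nonempty ∧ IsClosed (H ⁻¹' {s}) ∧ (H ⁻¹' {s}).OrdConnected ∧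
      ∀ η₁ ∈ H ⁻¹' {s}, ∀ η₂ ∈ H ⁻¹' {s}, ∀ i,
        clipEReal (L i) (U i) (c i + η₁ / δ i) =
          clipEReal (L i) (U i) (c i + η₂ / δ i) := by
  classical
  -- affine maps
  have haff_mono : ∀ i : Fin n, Monotone (fun η : ℝ => c i + η / δ i) := by
    intro i x y hxy
    exact add_le_add_right ((div_le_div_iff_of_pos_right (hδ i)).2 hxy) _
  have haff_cont : ∀ i : Fin n, Continuous (fun η : ℝ => c i + η / δ i) := by
    intro i; exact continuous_const.add (continuous_id.div_const _)
  have gmono : ∀ i : Fin n,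
      Monotone (fun η : ℝ => clipEReal (L i) (U i) (c i + η / δ i)) :=
    fun i => (clip_mono (hL i) (hU i) (hLU i)).comp (haff_mono i)
  have Hcont : Continuous H := by
    rw [hH]
    exact continuous_finset_sum _ fun i _ =>
      (clip_cont (hL i) (hU i) (hLU i)).comp (haff_cont i)
  have Hmono : Monotone H := by
    intro x y hxy
    rw [hH]
    exact Finset.sum_le_sum fun i _ => gmono i hxy
  refine ⟨Hcont, Hmono, fun s hs1 hs2 => ?_⟩
  -- existence of a point with H a ≤ s
  have hlow : ∃ a, H a ≤ s := by
    by_cases hbot : ∀ i, L i ≠ ⊥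
    · set a : Fin n → ℝ := fun i => (L i).toReal with ha
      have hLa : ∀ i, L i = (a i : EReal) := fun i =>
        (EReal.coe_toReal (hL i) (hbot i)).symm
      obtain ⟨M, hM⟩ := Finset.exists_le
        ((Finset.univ : Finset (Fin n)).image fun i => -(δ i * (a i - c i)))
      refine ⟨-M, ?_⟩
      have hy : ∀ i : Fin n, c i + (-M) / δ i ≤ a i := by
        intro i
        have h1 : -(δ i * (a i - c i)) ≤ M :=
          hM _ (Finset.mem_image_of_mem _ (Finset.mem_univ i))
        have h2 : (-M) / δ i ≤ a i - c i := by
          rw [div_le_iff₀ (hδ i)]; nlinarith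
        linarith
      have hHa : H (-M) = ∑ i, a i := by
        rw [hH]
        exact Finset.sum_congr rfl fun i _ =>
          clip_eq_left (hL i) (hU i) (hLU i) (hLa i) (hy i)
      have hlt : (∑ i, a i) < s := by
        have : ((∑ i, a i : ℝ) : EReal) < (s : EReal) := by
          rw [ecoe_sum']
          calc (∑ i, (a i : EReal)) = ∑ i, L i :=
                Finset.sum_congr rfl fun i _ => (hLa i).symm
            _ < (s : EReal) := hs1
        exact_mod_cast this
      rw [hHa]; linarith
    · push_neg at hbot
      obtain ⟨j, hj⟩ := hbot
      set C : ℝ := ∑ i ∈ Finset.univ.erase j, clipEReal (L i) (U i) (c i + 0 / δ i)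
        with hC
      refine ⟨min 0 (δ j * (s - C - c j)), ?_⟩
      set η := min 0 (δ j * (s - C - c j)) with hηdef
      have hη0 : η ≤ 0 := min_le_left _ _
      have hη1 : η ≤ δ j * (s - C - c j) := min_le_right _ _
      have hterm : clipEReal (L j) (U j) (c j + η / δ j) ≤ s - C := by
        refine (clip_le_self (hL j) (hU j) (hLU j) hj _).trans ?_
        have : η / δ j ≤ s - C - c j := by
          rw [div_le_iff₀ (hδ j)]; nlinarith
        linarith
      have hrest : ∑ i ∈ Finset.univ.erase j, clipEReal (L i) (U i) (c i + η / δ i)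
          ≤ C := by
        rw [hC]
        exact Finset.sum_le_sum fun i _ => gmono i hη0
      rw [hH]
      calc (∑ i, clipEReal (L i) (U i) (c i + η / δ i))
          = clipEReal (L j) (U j) (c j + η / δ j) +
            ∑ i ∈ Finset.univ.erase j, clipEReal (L i) (U i) (c i + η / δ i) :=
            (Finset.add_sum_erase _
              (fun i => clipEReal (L i) (U i) (c i + η / δ i)) (Finset.mem_univ j)).symm
        _ ≤ (s - C) + C := add_le_add hterm hrest
        _ = s := by ring
  -- existence of a point with s ≤ H b
  have hhigh : ∃ b, s ≤ H b := by
    by_cases htop : ∀ i, U i ≠ ⊤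
    · set b : Fin n → ℝ := fun i => (U i).toReal with hb
      have hUb : ∀ i, U i = (b i : EReal) := fun i =>
        (EReal.coe_toReal (htop i) (hU i)).symm
      obtain ⟨M, hM⟩ := Finset.exists_le
        ((Finset.univ : Finset (Fin n)).image fun i => δ i * (b i - c i))
      refine ⟨M, ?_⟩
      have hy : ∀ i : Fin n, b i ≤ c i + M / δ i := by
        intro i
        have h1 : δ i * (b i - c i) ≤ M :=
          hM _ (Finset.mem_image_of_mem _ (Finset.mem_univ i))
        have h2 : b i - c i ≤ M / δ i := by
          rw [le_div_iff₀ (hδ i)]; nlinarith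
        linarith
      have hHb : H M = ∑ i, b i := by
        rw [hH]
        exact Finset.sum_congr rfl fun i _ =>
          clip_eq_right (hL i) (hU i) (hLU i) (hUb i) (hy i)
      have hlt : s < (∑ i, b i) := by
        have : (s : EReal) < ((∑ i, b i : ℝ) : EReal) := by
          rw [ecoe_sum']
          calc (s : EReal) < ∑ i, U i := hs2
            _ = ∑ i, (b i : EReal) := Finset.sum_congr rfl fun i _ => hUb i
        exact_mod_cast this
      rw [hHb]; linarith
    · push_neg at htop
      obtain ⟨j, hj⟩ := htop
      set C : ℝ := ∑ i ∈ Finset.univ.erase j, clipEReal (L i) (U i) (c i + 0 / δ i)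
        with hC
      refine ⟨max 0 (δ j * (s - C - c j)), ?_⟩
      set η := max 0 (δ j * (s - C - c j)) with hηdef
      have hη0 : (0:ℝ) ≤ η := le_max_left _ _
      have hη1 : δ j * (s - C - c j) ≤ η := le_max_right _ _
      have hterm : s - C ≤ clipEReal (L j) (U j) (c j + η / δ j) := by
        refine le_trans ?_ (self_le_clip (hL j) (hU j) (hLU j) hj _)
        have : s - C - c j ≤ η / δ j := by
          rw [le_div_iff₀ (hδ j)]; nlinarith
        linarith
      have hrest : C ≤
          ∑ i ∈ Finset.univ.erase j, clipEReal (L i) (U i) (c i + η / δ i) := by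
        rw [hC]
        exact Finset.sum_le_sum fun i _ => gmono i hη0
      rw [hH]
      calc s = (s - C) + C := by ring
        _ ≤ clipEReal (L j) (U j) (c j + η / δ j) +
            ∑ i ∈ Finset.univ.erase j, clipEReal (L i) (U i) (c i + η / δ i) :=
            add_le_add hterm hrest
        _ = ∑ i, clipEReal (L i) (U i) (c i + η / δ i) :=
            Finset.add_sum_erase _
              (fun i => clipEReal (L i) (U i) (c i + η / δ i)) (Finset.mem_univ j)
  -- nonemptiness via IVT
  obtain ⟨a, ha⟩ := hlow
  obtain ⟨b, hb⟩ := hhigh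
  have hmem : s ∈ Set.Icc (H (min a b)) (H (max a b)) :=
    ⟨(Hmono (min_le_left a b)).trans ha, hb.trans (Hmono (le_max_right a b))⟩
  obtain ⟨η₀, _, hη₀⟩ := intermediate_value_Icc (min_le_max) Hcont.continuousOn hmem
  refine ⟨⟨η₀, hη₀⟩, isClosed_singleton.preimage Hcont, ?_, ?_⟩
  · refine ⟨fun η₁ h₁ η₂ h₂ z hz => ?_⟩
    have h₁' : H η₁ = s := h₁
    have h₂' : H η₂ = s := h₂
    have : H z = s := le_antisymm (h₂' ▸ Hmono hz.2) (h₁' ▸ Hmono hz.1)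
    exact this
  · have key : ∀ x y : ℝ, x ≤ y → H x = s → H y = s → ∀ i,
        clipEReal (L i) (U i) (c i + x / δ i) = clipEReal (L i) (U i) (c i + y / δ i) := by
      intro x y hxy hx hy i
      have hsum : (∑ i, clipEReal (L i) (U i) (c i + x / δ i))
          = ∑ i, clipEReal (L i) (U i) (c i + y / δ i) := by
        simp only [hH] at hx hy
        exact hx.trans hy.symm
      exact (Finset.sum_eq_sum_iff_of_le fun i _ => gmono i hxy).1 hsum i
        (Finset.mem_univ i)
    intro η₁ h₁ η₂ h₂ i
    have h₁' : H η₁ = s := h₁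
    have h₂' : H η₂ = s := h₂
    rcases le_total η₁ η₂ with h | h
    · exact key _ _ h h₁' h₂' i
    · exact (key _ _ h h₂' h₁' i).symm
end

section
/- Let w₁,…,wₙ > 0 and let Y₁,…,Yₙ be square-integrable random variables with ∑ᵢ Yᵢ = S. Then ∑ᵢ wᵢ·Var(Yᵢ) ≥ (∑ᵢ wᵢ⁻¹)⁻¹·Var(S), with equality when Yᵢ = (wᵢ⁻¹/∑ⱼwⱼ⁻¹)·S + constants. -/
open MeasureTheory ProbabilityTheory

private lemma var_add_const {Ω : Type*} [MeasurableSpace Ω] (μ : Measure Ω)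
    [IsProbabilityMeasure μ] (X : Ω → ℝ) (hX : MemLp X 2 μ) (c : ℝ) :
    variance (fun ω => X ω + c) μ = variance X μ := by
  have hXc : MemLp (fun ω => X ω + c) 2 μ := hX.add (memLp_const c)
  have hint : μ[fun ω => X ω + c] = μ[X] + c := by
    rw [integral_add (hX.integrable one_le_two) (integrable_const c)]
    simp
  rw [variance_eq_integral hXc.aemeasurable, variance_eq_integral hX.aemeasurable, hint]
  congr 1
  ext ω
  ring

/-- Weighted variance lower bound: if `∑ᵢ Yᵢ = S` then
`∑ᵢ wᵢ·Var(Yᵢ) ≥ (∑ᵢ wᵢ⁻¹)⁻¹·Var(S)`, with equality for the proportional rule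
`Yᵢ = (wᵢ⁻¹/∑ⱼwⱼ⁻¹)·S + constants`. -/
theorem stmt19 {Ω : Type*} [MeasurableSpace Ω] (μ : Measure Ω) [IsProbabilityMeasure μ]
    (n : ℕ) (w : Fin n → ℝ) (hw : ∀ i, 0 < w i)
    (S : Ω → ℝ) (hS : MemLp S 2 μ) :
    (∀ Y : Fin n → Ω → ℝ, (∀ i, MemLp (Y i) 2 μ) →
      (∀ ω, (∑ i, Y i ω) = S ω) →
      (∑ i, (w i)⁻¹)⁻¹ * variance S μ ≤ ∑ i, w i * variance (Y i) μ) ∧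
    ∀ Y : Fin n → Ω → ℝ, ∀ b : Fin n → ℝ,
      (Y = fun i ω => ((w i)⁻¹ / ∑ j, (w j)⁻¹) * S ω + b i) →
      (∀ ω, (∑ i, Y i ω) = S ω) →
      (∑ i, (w i)⁻¹)⁻¹ * variance S μ = ∑ i, w i * variance (Y i) μ := by
  set T : ℝ := ∑ i, (w i)⁻¹ with hT
  have hT0 : 0 ≤ T := Finset.sum_nonneg fun i _ => (inv_pos.2 (hw i)).le
  constructor
  · intro Y hY hsum
    set Z : Fin n → Ω → ℝ := fun i ω => Y i ω - μ[Y i] with hZdef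
    have hZ : ∀ i, MemLp (Z i) 2 μ := fun i => (hY i).sub (memLp_const _)
    have hES : μ[S] = ∑ i, μ[Y i] := by
      rw [show S = fun ω => ∑ i, Y i ω from funext fun ω => (hsum ω).symm]
      exact integral_finset_sum _ fun i _ => (hY i).integrable one_le_two
    -- pointwise Cauchy-Schwarz
    have key : ∀ ω, (S ω - μ[S]) ^ 2 ≤ T * ∑ i, w i * (Z i ω) ^ 2 := by
      intro ω
      have h1 : S ω - μ[S] = ∑ i, Real.sqrt (w i)⁻¹ * (Real.sqrt (w i) * Z i ω) := by
        rw [← hsum ω, hES, ← Finset.sum_sub_distrib]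
        refine Finset.sum_congr rfl fun i _ => ?_
        have : Real.sqrt (w i)⁻¹ * Real.sqrt (w i) = 1 := by
          rw [← Real.sqrt_mul (inv_pos.2 (hw i)).le, inv_mul_cancel₀ (hw i).ne', Real.sqrt_one]
        rw [← mul_assoc, this, one_mul]
      rw [h1]
      calc (∑ i, Real.sqrt (w i)⁻¹ * (Real.sqrt (w i) * Z i ω)) ^ 2
          ≤ (∑ i, Real.sqrt (w i)⁻¹ ^ 2) * ∑ i, (Real.sqrt (w i) * Z i ω) ^ 2 :=
            Finset.sum_mul_sq_le_sq_mul_sq _ _ _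
        _ = T * ∑ i, w i * (Z i ω) ^ 2 := by
            congr 1
            · exact Finset.sum_congr rfl fun i _ => Real.sq_sqrt (inv_pos.2 (hw i)).le
            · refine Finset.sum_congr rfl fun i _ => ?_
              rw [mul_pow, Real.sq_sqrt (hw i).le]
    have hVar : ∀ i, variance (Y i) μ = μ[fun ω => (Z i ω) ^ 2] := by
      intro i
      exact variance_eq_integral (hY i).aemeasurable
    have hVarS : variance S μ = μ[fun ω => (S ω - μ[S]) ^ 2] := by
      exact variance_eq_integral hS.aemeasurable
    have hintZ : ∀ i, Integrable (fun ω => (Z i ω) ^ 2) μ := fun i => (hZ i).integrable_sq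
    have hintG : Integrable (fun ω => T * ∑ i, w i * (Z i ω) ^ 2) μ := by
      exact (integrable_finset_sum _ fun i _ => ((hintZ i).const_mul (w i))).const_mul T
    have hle : variance S μ ≤ T * ∑ i, w i * variance (Y i) μ := by
      rw [hVarS]
      calc μ[fun ω => (S ω - μ[S]) ^ 2] ≤ μ[fun ω => T * ∑ i, w i * (Z i ω) ^ 2] :=
            integral_mono_of_nonneg (f := fun ω => (S ω - μ[S]) ^ 2)
              (g := fun ω => T * ∑ i, w i * (Z i ω) ^ 2)
              (ae_of_all _ fun ω => sq_nonneg _) hintG (ae_of_all _ key)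
        _ = T * ∑ i, w i * variance (Y i) μ := by
            rw [integral_const_mul, integral_finset_sum _ fun i _ => (hintZ i).const_mul (w i)]
            congr 1
            exact Finset.sum_congr rfl fun i _ => by rw [integral_const_mul, hVar i]
    rcases eq_or_lt_of_le hT0 with h0 | hpos
    · rw [← h0, inv_zero, zero_mul]
      exact Finset.sum_nonneg fun i _ => mul_nonneg (hw i).le (variance_nonneg _ _)
    · rw [inv_mul_le_iff₀ hpos]
      exact hle
  · intro Y b hYdef hsum
    subst hYdef
    rcases eq_or_lt_of_le hT0 with h0 | hpos
    · have hn : (Finset.univ : Finset (Fin n)) = ∅ := by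
        by_contra h
        obtain ⟨i, _⟩ := Finset.nonempty_of_ne_empty h
        have : (0:ℝ) < T := Finset.sum_pos (fun j _ => inv_pos.2 (hw j)) ⟨i, Finset.mem_univ i⟩
        exact absurd h0 (by linarith)
      have hS0 : S = fun _ => (0:ℝ) := by
        funext ω
        have := hsum ω
        rw [hn] at this
        simpa using this.symm
      rw [hS0]
      simp only [hn, Finset.sum_empty, inv_zero, zero_mul]
      rw [show (fun (_:Ω) => (0:ℝ)) = (0 : Ω → ℝ) from rfl, variance_zero, mul_zero]
    · have hVarY : ∀ i, variance (fun ω => (w i)⁻¹ / T * S ω + b i) μ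
          = ((w i)⁻¹ / T) ^ 2 * variance S μ := by
        intro i
        rw [var_add_const μ _ (hS.const_mul _), variance_const_mul]
      calc T⁻¹ * variance S μ
          = (∑ i, w i * ((w i)⁻¹ / T) ^ 2) * variance S μ := by
            congr 1
            rw [Finset.sum_congr rfl (fun i _ => show w i * ((w i)⁻¹ / T) ^ 2
              = (w i)⁻¹ * (T⁻¹ * T⁻¹) by field_simp [(hw i).ne']), ← Finset.sum_mul,
              ← hT]
            field_simp
        _ = ∑ i, w i * variance (fun ω => (w i)⁻¹ / T * S ω + b i) μ := by
            rw [Finset.sum_mul]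
            exact Finset.sum_congr rfl fun i _ => by rw [hVarY i]; ring
end
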